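/- Let G be a finite simple graph, let c be an edge colouring of G, let κ be a colour, and let X and Y be disjoint sets of vertices of G such that every edge of colour κ with at least one endpoint in Y has its other endpoint in X. Let D > 0 and 0 < ε ≤ 1 be real numbers. If every vertex v ∈ Y satisfies d_κ(v) ≥ (1 + 3ε/4)·D and every vertex u ∈ X satisfies d_κ(u) ≤ (1 + ε/4)·D, then |X| ≥ (1 + ε/4)·|Y|. -/

import Mathlib

open Finset

/-- The number of edges of colour `κ` incident to the vertex `v`
(in a simple graph, with an edge colouring `c`, not necessarily proper). -/
def colDeg {V : Type*} [Fintype V] [DecidableEq V] (G : SimpleGraph V) [DecidableRel G.Adj]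
    (c : Sym2 V → ℕ) (κ : ℕ) (v : V) : ℕ :=
  ((G.neighborFinset v).filter (fun u => c s(v, u) = κ)).card

lemma sum_colDeg_eq {V : Type*} [Fintype V] [DecidableEq V] (G : SimpleGraph V)
    [DecidableRel G.Adj] (c : Sym2 V → ℕ) (κ : ℕ) (S : Finset V) :
    ∑ v ∈ S, colDeg G c κ v =
      ((S ×ˢ Finset.univ).filter (fun p : V × V => G.Adj p.1 p.2 ∧ c s(p.1, p.2) = κ)).card := by
  rw [Finset.card_filter, Finset.sum_product]
  refine Finset.sum_congr rfl fun v _ => ?_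
  have h : (G.neighborFinset v).filter (fun u => c s(v, u) = κ) =
      Finset.univ.filter (fun u => G.Adj v u ∧ c s(v, u) = κ) := by
    ext u; simp [SimpleGraph.mem_neighborFinset]
  rw [colDeg, h, Finset.card_filter]

/-- If every `κ`-coloured edge with an endpoint in `Y` has its other endpoint in the
disjoint set `X`, every vertex of `Y` has `κ`-degree at least `(1 + 3ε/4)·D`, and every
vertex of `X` has `κ`-degree at most `(1 + ε/4)·D`, then `|X| ≥ (1 + ε/4)·|Y|`. -/
theorem expansion_between {V : Type*} [Fintype V] [DecidableEq V]
    (G : SimpleGraph V) [DecidableRel G.Adj]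
    (c : Sym2 V → ℕ) (κ : ℕ) (X Y : Finset V) (D ε : ℝ)
    (hD : 0 < D) (hε0 : 0 < ε) (hε : ε ≤ 1)
    (hdisj : Disjoint X Y)
    (hedge : ∀ u v, G.Adj u v → c s(u, v) = κ → v ∈ Y → u ∈ X)
    (ha : ∀ v ∈ Y, (1 + 3 * ε / 4) * D ≤ (colDeg G c κ v : ℝ))
    (hb : ∀ u ∈ X, (colDeg G c κ u : ℝ) ≤ (1 + ε / 4) * D) :
    (1 + ε / 4) * Y.card ≤ (X.card : ℝ) := by
  have hsum : ∑ v ∈ Y, colDeg G c κ v ≤ ∑ u ∈ X, colDeg G c κ u := by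
    rw [sum_colDeg_eq, sum_colDeg_eq]
    apply Finset.card_le_card_of_injOn Prod.swap
    · rintro ⟨v, u⟩ hp
      replace hp : (v, u) ∈ ((Y ×ˢ Finset.univ).filter
          (fun p : V × V => G.Adj p.1 p.2 ∧ c s(p.1, p.2) = κ)) := hp
      simp only [Finset.mem_coe, Prod.swap_prod_mk, Finset.mem_filter, Finset.mem_product, Finset.mem_univ,
        true_and, and_true] at hp ⊢
      obtain ⟨hv, hadj, hc⟩ := hp
      have hc' : c s(u, v) = κ := by rwa [Sym2.eq_swap] at hc
      exact ⟨hedge u v hadj.symm hc' hv, hadj.symm, hc'⟩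
    · intro a _ b _ h
      exact Prod.swap_injective h
  have h1 : (1 + 3 * ε / 4) * D * Y.card ≤ ∑ v ∈ Y, (colDeg G c κ v : ℝ) := by
    calc (1 + 3 * ε / 4) * D * Y.card = ∑ _v ∈ Y, (1 + 3 * ε / 4) * D := by
          rw [Finset.sum_const, nsmul_eq_mul]; ring
      _ ≤ _ := Finset.sum_le_sum ha
  have h2 : ∑ u ∈ X, (colDeg G c κ u : ℝ) ≤ (1 + ε / 4) * D * X.card := by
    calc ∑ u ∈ X, (colDeg G c κ u : ℝ) ≤ ∑ _u ∈ X, (1 + ε / 4) * D := Finset.sum_le_sum hb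
      _ = _ := by rw [Finset.sum_const, nsmul_eq_mul]; ring
  have hsum' : ∑ v ∈ Y, (colDeg G c κ v : ℝ) ≤ ∑ u ∈ X, (colDeg G c κ u : ℝ) := by
    rw [← Nat.cast_sum, ← Nat.cast_sum]
    exact_mod_cast hsum
  have key : (1 + 3 * ε / 4) * D * Y.card ≤ (1 + ε / 4) * D * X.card :=
    h1.trans (hsum'.trans h2)
  have hY : (0:ℝ) ≤ Y.card := Nat.cast_nonneg _
  nlinarith [mul_pos hD hε0, mul_nonneg hY (mul_nonneg hD.le hε0.le)]
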